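/- Let D(u) = ⟨∇f(u), u − v(u)⟩ + g(u) − g(v(u)) − (1/2)‖u − v(u)‖_P², where v(u) minimizes w ↦ ⟨∇f(u), w⟩ − ⟨u, w⟩_P + (1/2)‖w‖_P² + g(w). Then D(u) ≥ 0 for every u ∈ H, and D(u) = 0 if and only if u is a minimizer of f + g. -/

import Mathlib

open RealInnerProductSpace

open Filter Set Topology in
/-- Directional derivative as a one-sided limit of difference quotients. -/
lemma hpgcg_dir_tendsto
    {H : Type*} [NormedAddCommGroup H] [InnerProductSpace ℝ H] [CompleteSpace H]
    (f : H → ℝ) (G u d : H) (h : HasGradientAt f G u) :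
    Tendsto (fun t : ℝ => (f (u + t • d) - f u) / t) (𝓝[>] (0 : ℝ)) (𝓝 ⟪G, d⟫) := by
  have hF : HasFDerivAt f (InnerProductSpace.toDual ℝ H G) u := h.hasFDerivAt
  have hline : HasDerivAt (fun t : ℝ => u + t • d) d 0 := by
    simpa using ((hasDerivAt_id (0 : ℝ)).smul_const d).const_add u
  have hF' : HasFDerivAt f (InnerProductSpace.toDual ℝ H G) (u + (0 : ℝ) • d) := by
    rw [zero_smul, add_zero]; exact hF
  have hcomp : HasDerivAt (fun t : ℝ => f (u + t • d))
      ((InnerProductSpace.toDual ℝ H G) d) 0 :=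
    hF'.comp_hasDerivAt 0 hline
  have htend := hasDerivAt_iff_tendsto_slope.mp hcomp
  have htend' := htend.mono_left
    (nhdsWithin_mono (0 : ℝ) (fun x hx => ne_of_gt hx))
  have heq : ∀ t : ℝ, slope (fun t : ℝ => f (u + t • d)) 0 t
      = (f (u + t • d) - f u) / t := by
    intro t
    simp [slope, div_eq_inv_mul]
  have : (fun t : ℝ => (f (u + t • d) - f u) / t)
      = slope (fun t : ℝ => f (u + t • d)) 0 := by
    funext t; rw [heq]
  rw [this]
  rw [InnerProductSpace.toDual_apply_apply] at htend'; exact htend'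

open Filter Set Topology in
/-- Gradient inequality for convex functions. -/
lemma hpgcg_grad_ineq
    {H : Type*} [NormedAddCommGroup H] [InnerProductSpace ℝ H] [CompleteSpace H]
    (f : H → ℝ) (G u : H) (hf : ConvexOn ℝ Set.univ f)
    (h : HasGradientAt f G u) (w : H) :
    f u + ⟪G, w - u⟫ ≤ f w := by
  have htend := hpgcg_dir_tendsto f G u (w - u) h
  have key : ∀ t ∈ Ioo (0 : ℝ) 1, (f (u + t • (w - u)) - f u) / t ≤ f w - f u := by
    intro t ht
    have hconv := hf.2 (Set.mem_univ u) (Set.mem_univ w)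
      (by linarith [ht.2] : (0:ℝ) ≤ 1 - t) ht.1.le (by ring)
    have e : (1 - t) • u + t • w = u + t • (w - u) := by
      rw [sub_smul, one_smul, smul_sub]; abel
    rw [e] at hconv
    simp only [smul_eq_mul] at hconv
    rw [div_le_iff₀ ht.1]
    nlinarith [ht.1]
  have hle : ⟪G, w - u⟫ ≤ f w - f u := by
    refine le_of_tendsto htend ?_
    filter_upwards [Ioo_mem_nhdsGT (by norm_num : (0:ℝ) < 1)] with t ht
    exact key t ht
  linarith

/-- Lemma 1, part 3 of the HPGCG analysis: D(u) ≥ 0, and D(u) = 0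
iff u is a minimizer of f + g. -/
theorem hpgcg_lemma1_part3
    {H : Type*} [NormedAddCommGroup H] [InnerProductSpace ℝ H] [CompleteSpace H]
    (f : H → ℝ) (f' : H → H) (g : H → ℝ) (P : H →L[ℝ] H) (L : NNReal)
    (hf : ConvexOn ℝ Set.univ f)
    (hf' : ∀ x, HasGradientAt f (f' x) x)
    (hf'_lip : LipschitzWith L f')
    (hg : ConvexOn ℝ Set.univ g)
    (hg_lsc : LowerSemicontinuous g)
    (hP_sa : ∀ x y : H, ⟪P x, y⟫ = ⟪x, P y⟫)
    (hP_pos : ∀ x : H, 0 ≤ ⟪x, P x⟫)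
    (u v : H)
    -- v = v(u) is a minimizer of w ↦ ⟨∇f(u), w⟩ − ⟨u, w⟩_P + (1/2)‖w‖_P² + g(w)
    (hv : ∀ w : H,
      ⟪f' u, v⟫ - ⟪u, P v⟫ + (1/2) * ⟪v, P v⟫ + g v ≤
      ⟪f' u, w⟫ - ⟪u, P w⟫ + (1/2) * ⟪w, P w⟫ + g w) :
    0 ≤ ⟪f' u, u - v⟫ + g u - g v - (1/2) * ⟪u - v, P (u - v)⟫ ∧
    ((⟪f' u, u - v⟫ + g u - g v - (1/2) * ⟪u - v, P (u - v)⟫ = 0) ↔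
      ∀ w : H, f u + g u ≤ f w + g w) := by
  have hsym : ∀ a b : H, ⟪a, P b⟫ = ⟪b, P a⟫ := by
    intro a b; rw [← hP_sa a b, real_inner_comm]
  have expand : ∀ a b : H, ⟪a - b, P (a - b)⟫ = ⟪a, P a⟫ - 2 * ⟪a, P b⟫ + ⟪b, P b⟫ := by
    intro a b
    have h1 : ⟪b, P a⟫ = ⟪a, P b⟫ := hsym b a
    rw [map_sub, inner_sub_left, inner_sub_right, inner_sub_right, h1]; ring
  have hfu : ∀ w : H, ⟪f' u, w - u⟫ = ⟪f' u, w⟫ - ⟪f' u, u⟫ := fun w =>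
    inner_sub_right _ _ _
  -- Part 1: D ≥ 0
  have hD0 : 0 ≤ ⟪f' u, u - v⟫ + g u - g v - (1/2) * ⟪u - v, P (u - v)⟫ := by
    have h0 := hv u
    rw [expand u v]
    have huv : ⟪f' u, u - v⟫ = ⟪f' u, u⟫ - ⟪f' u, v⟫ := inner_sub_right _ _ _
    linarith
  refine ⟨hD0, ?_, ?_⟩
  · -- D = 0 → u minimizes f + g
    intro hDeq w
    rw [expand u v] at hDeq
    -- u minimizes Q, i.e. 0 ≤ ⟪f'u, w-u⟫ + (1/2)⟪w-u,P(w-u)⟫ + g w - g u for all w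
    have hQ : ∀ w : H,
        0 ≤ ⟪f' u, w - u⟫ + (1/2) * ⟪w - u, P (w - u)⟫ + g w - g u := by
      intro w
      have h1 := hv w
      have h2 := hv u
      rw [expand w u, hfu w]
      have h3 : ⟪w, P u⟫ = ⟪u, P w⟫ := hsym w u
      have h4 : ⟪f' u, u - v⟫ = ⟪f' u, u⟫ - ⟪f' u, v⟫ := inner_sub_right _ _ _
      linarith
    -- drop the quadratic term by scaling
    have hsub : ∀ w : H, 0 ≤ ⟪f' u, w - u⟫ + g w - g u := by
      intro w
      have hC : 0 ≤ ⟪w - u, P (w - u)⟫ := hP_pos _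
      have hstep : ∀ t ∈ Set.Ioo (0:ℝ) 1,
          0 ≤ (⟪f' u, w - u⟫ + g w - g u) + t * ⟪w - u, P (w - u)⟫ / 2 := by
        intro t ht
        have hQt := hQ (u + t • (w - u))
        have e1 : u + t • (w - u) - u = t • (w - u) := add_sub_cancel_left u _
        rw [e1] at hQt
        rw [real_inner_smul_right] at hQt
        have e2 : ⟪t • (w - u), P (t • (w - u))⟫ = t * (t * ⟪w - u, P (w - u)⟫) := by
          rw [map_smul, real_inner_smul_left, real_inner_smul_right]
        rw [e2] at hQt
        have hconv := hg.2 (Set.mem_univ u) (Set.mem_univ w)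
          (by linarith [ht.2] : (0:ℝ) ≤ 1 - t) ht.1.le (by ring)
        have e3 : (1 - t) • u + t • w = u + t • (w - u) := by
          rw [sub_smul, one_smul, smul_sub]; abel
        rw [e3] at hconv
        simp only [smul_eq_mul] at hconv
        have h5 : 0 ≤ t * ((⟪f' u, w - u⟫ + g w - g u) + t * ⟪w - u, P (w - u)⟫ / 2) := by
          nlinarith [hQt, hconv]
        by_contra hneg
        push_neg at hneg
        nlinarith [h5, mul_pos ht.1 (neg_pos.mpr hneg)]
      have htend : Filter.Tendsto
          (fun t : ℝ => (⟪f' u, w - u⟫ + g w - g u) + t * ⟪w - u, P (w - u)⟫ / 2)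
          (nhdsWithin (0:ℝ) (Set.Ioi 0)) (nhds (⟪f' u, w - u⟫ + g w - g u)) := by
        have h1 : Filter.Tendsto
            (fun t : ℝ => (⟪f' u, w - u⟫ + g w - g u) + t * ⟪w - u, P (w - u)⟫ / 2)
            (nhds (0:ℝ))
            (nhds ((⟪f' u, w - u⟫ + g w - g u) + 0 * ⟪w - u, P (w - u)⟫ / 2)) :=
          (tendsto_const_nhds.add ((continuous_id.mul continuous_const).div_const 2
            |>.tendsto 0))
        simpa using h1.mono_left nhdsWithin_le_nhds
      refine ge_of_tendsto htend ?_
      filter_upwards [Ioo_mem_nhdsGT (by norm_num : (0:ℝ) < 1)] with t ht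
      exact hstep t ht
    have hgrad := hpgcg_grad_ineq f (f' u) u hf (hf' u) w
    have := hsub w
    linarith
  · -- u minimizes f + g → D = 0
    intro hmin
    have htend := hpgcg_dir_tendsto f (f' u) u (v - u) (hf' u)
    have hstep : ∀ t ∈ Set.Ioo (0:ℝ) 1,
        g u - g v ≤ (f (u + t • (v - u)) - f u) / t := by
      intro t ht
      have hm := hmin (u + t • (v - u))
      have hconv := hg.2 (Set.mem_univ u) (Set.mem_univ v)
        (by linarith [ht.2] : (0:ℝ) ≤ 1 - t) ht.1.le (by ring)
      have e3 : (1 - t) • u + t • v = u + t • (v - u) := by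
        rw [sub_smul, one_smul, smul_sub]; abel
      rw [e3] at hconv
      simp only [smul_eq_mul] at hconv
      rw [le_div_iff₀ ht.1]
      nlinarith [ht.1]
    have hkey : g u - g v ≤ ⟪f' u, v - u⟫ := by
      refine ge_of_tendsto htend ?_
      filter_upwards [Ioo_mem_nhdsGT (by norm_num : (0:ℝ) < 1)] with t ht
      exact hstep t ht
    have h1 : ⟪f' u, v - u⟫ = ⟪f' u, v⟫ - ⟪f' u, u⟫ := inner_sub_right _ _ _
    have h2 : ⟪f' u, u - v⟫ = ⟪f' u, u⟫ - ⟪f' u, v⟫ := inner_sub_right _ _ _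
    have h3 : 0 ≤ ⟪u - v, P (u - v)⟫ := hP_pos _
    linarith [hD0]
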